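/- arXiv:1307.5524 — 4 statements merged into one kernel-verified Lean document; each statement's English description precedes it below -/
import Mathlib

section
/- (de Caen's inequality) Let $A_1, \ldots, A_n$ be events in a probability space, each with positive probability. Then $\Pr\left(\bigcup_{i=1}^n A_i\right) \geq \sum_{i=1}^n \frac{\Pr(A_i)^2}{\sum_{j=1}^n \Pr(A_i \cap A_j)}$. -/
open MeasureTheory
open scoped ENNReal

/-- de Caen's inequality: For events `A₁,…,Aₙ` of positive probability in a
probability space, `P(⋃ i, Aᵢ) ≥ ∑ i, P(Aᵢ)² / ∑ j, P(Aᵢ ∩ Aⱼ)`. -/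
theorem stmt7 {Ω : Type*} [MeasurableSpace Ω] (μ : Measure Ω) [IsProbabilityMeasure μ]
    (n : ℕ) (A : Fin n → Set Ω) (hmeas : ∀ i, MeasurableSet (A i))
    (hpos : ∀ i, 0 < μ (A i)) :
    ∑ i, (μ (A i)) ^ 2 / (∑ j, μ (A i ∩ A j)) ≤ μ (⋃ i, A i) := by
  classical
  set N : Ω → ℝ≥0∞ := fun ω => ∑ j, (A j).indicator 1 ω with hN
  have hNmeas : Measurable N := by
    apply Finset.measurable_sum
    intro j _
    exact (measurable_one.indicator (hmeas j))
  -- N ω ≥ 1 on A i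
  have hN1 : ∀ i (ω : Ω), ω ∈ A i → 1 ≤ N ω := by
    intro i ω hω
    calc (1:ℝ≥0∞) = (A i).indicator 1 ω := by simp [Set.indicator_of_mem hω]
    _ ≤ N ω := Finset.single_le_sum (f := fun j => (A j).indicator 1 ω)
        (fun j _ => zero_le) (Finset.mem_univ i)
  have hNtop : ∀ ω, N ω ≠ ⊤ := by
    intro ω
    refine ne_of_lt ?_
    calc N ω ≤ ∑ _j : Fin n, 1 :=
      Finset.sum_le_sum fun j _ => Set.indicator_le_self' (fun _ _ => zero_le) ω
    _ < ⊤ := by simp [lt_top_iff_ne_top]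
  -- ∫_{A i} N = ∑ j μ (A i ∩ A j)
  have key1 : ∀ i, ∫⁻ ω in A i, N ω ∂μ = ∑ j, μ (A i ∩ A j) := by
    intro i
    rw [lintegral_finset_sum _ (fun j _ => (measurable_one.indicator (hmeas j)))]
    refine Finset.sum_congr rfl fun j _ => ?_
    rw [lintegral_indicator (hmeas j) _]
    simp [Measure.restrict_apply (hmeas j), Set.inter_comm]
  -- Cauchy-Schwarz
  have key2 : ∀ i, (μ (A i)) ^ 2 ≤ (∫⁻ ω in A i, N ω ∂μ) * (∫⁻ ω in A i, (N ω)⁻¹ ∂μ) := by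
    intro i
    have CS := ENNReal.lintegral_mul_norm_pow_le (μ := μ.restrict (A i))
      (hNmeas.aemeasurable) (hNmeas.inv.aemeasurable)
      (by norm_num : (0:ℝ) ≤ 1/2) (by norm_num : (0:ℝ) ≤ 1/2) (by norm_num)
    have hone : ∀ ω ∈ A i, N ω ^ (1/2:ℝ) * (N ω)⁻¹ ^ (1/2:ℝ) = (1 : ℝ≥0∞) := by
      intro ω hω
      have h1 := hN1 i ω hω
      have h0 : N ω ≠ 0 := by intro h; rw [h] at h1; simp at h1
      rw [← ENNReal.mul_rpow_of_nonneg _ _ (by norm_num : (0:ℝ) ≤ 1/2),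
        ENNReal.mul_inv_cancel h0 (hNtop ω), ENNReal.one_rpow]
    have hpt : ∫⁻ ω in A i, N ω ^ (1/2:ℝ) * (N ω)⁻¹ ^ (1/2:ℝ) ∂μ = μ (A i) := by
      rw [setLIntegral_congr_fun (hmeas i) (fun ω hω => hone ω hω)]
      simp
    simp only [Pi.inv_apply] at CS
    rw [hpt] at CS
    calc (μ (A i)) ^ 2 = ((μ (A i)) ^ (2:ℕ) : ℝ≥0∞) := by norm_num
    _ = (μ (A i)) ^ ((2:ℕ):ℝ) := (ENNReal.rpow_natCast _ 2).symm
    _ ≤ ((∫⁻ ω in A i, N ω ∂μ) ^ (1/2:ℝ) * (∫⁻ ω in A i, (N ω)⁻¹ ∂μ) ^ (1/2:ℝ)) ^ ((2:ℕ):ℝ) :=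
        ENNReal.rpow_le_rpow CS (by norm_num)
    _ = (∫⁻ ω in A i, N ω ∂μ) * (∫⁻ ω in A i, (N ω)⁻¹ ∂μ) := by
        rw [ENNReal.mul_rpow_of_nonneg _ _ (by norm_num : (0:ℝ) ≤ ((2:ℕ):ℝ)),
          ← ENNReal.rpow_mul, ← ENNReal.rpow_mul]
        norm_num
  -- sum of the inverse integrals equals μ(⋃ A i)
  have key3 : ∑ i, ∫⁻ ω in A i, (N ω)⁻¹ ∂μ = μ (⋃ i, A i) := by
    have : ∀ i, ∫⁻ ω in A i, (N ω)⁻¹ ∂μ = ∫⁻ ω, (A i).indicator 1 ω * (N ω)⁻¹ ∂μ := by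
      intro i
      rw [← lintegral_indicator (hmeas i) _]
      refine lintegral_congr fun ω => ?_
      by_cases hω : ω ∈ A i <;> simp [Set.indicator_of_mem, Set.indicator_of_notMem, hω]
    simp_rw [this]
    rw [← lintegral_finset_sum _ (fun i _ =>
      (show Measurable fun ω => (A i).indicator 1 ω * (N ω)⁻¹ from
        (measurable_one.indicator (hmeas i)).mul hNmeas.inv))]
    have hpt : ∀ ω, ∑ i, (A i).indicator 1 ω * (N ω)⁻¹ = (⋃ i, A i).indicator 1 ω := by
      intro ω
      rw [← Finset.sum_mul]
      by_cases hω : ω ∈ ⋃ i, A i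
      · obtain ⟨i, hi⟩ := Set.mem_iUnion.mp hω
        have h1 := hN1 i ω hi
        have h0 : N ω ≠ 0 := by intro h; rw [h] at h1; simp at h1
        rw [show ∑ j, (A j).indicator (1 : Ω → ℝ≥0∞) ω = N ω from rfl,
          ENNReal.mul_inv_cancel h0 (hNtop ω), Set.indicator_of_mem hω]
        rfl
      · have : ∀ j, (A j).indicator (1 : Ω → ℝ≥0∞) ω = 0 := by
          intro j
          exact Set.indicator_of_notMem (fun h => hω (Set.mem_iUnion.mpr ⟨j, h⟩)) _
        simp [this, Set.indicator_of_notMem hω]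
    rw [lintegral_congr hpt, lintegral_indicator (MeasurableSet.iUnion fun i => hmeas i) _]
    simp
  calc ∑ i, (μ (A i)) ^ 2 / (∑ j, μ (A i ∩ A j))
      ≤ ∑ i, ∫⁻ ω in A i, (N ω)⁻¹ ∂μ := by
        refine Finset.sum_le_sum fun i _ => ?_
        rw [← key1 i]
        exact ENNReal.div_le_of_le_mul (by rw [mul_comm]; exact key2 i)
    _ = μ (⋃ i, A i) := key3
end

section
/- Let $A_1, \ldots, A_n$ be events each of probability $\alpha > 0$, and suppose there is a constant $c \geq 0$ and for each $i$ at most $s$ indices $j \neq i$ with $\Pr(A_i \cap A_j) \leq \alpha$, while for all other $j \neq i$, $\Pr(A_i \cap A_j) = \alpha^2$. Then by de Caen's inequality, $\Pr\left(\bigcup_i A_i\right) \geq \frac{n\alpha}{(n-1-s)\alpha + (s+1)} \geq \frac{n\alpha}{n\alpha + (s+1)}$. -/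
open MeasureTheory

/-- Suppose `A₁,…,Aₙ` are events each of probability `α ∈ (0,1]`, and for
each `i` there is a "bad" set of at most `s` indices `j ≠ i` where
`P(Aᵢ ∩ Aⱼ) ≤ α`, while `P(Aᵢ ∩ Aⱼ) = α²` for all other `j ≠ i`. Then, by de Caen's
inequality, `P(⋃ i, Aᵢ) ≥ nα / ((n-1-s)α + (s+1)) ≥ nα / (nα + (s+1))`. -/
theorem stmt11 {Ω : Type*} [MeasurableSpace Ω] (μ : Measure Ω) [IsProbabilityMeasure μ]
    (n : ℕ) (hn : 2 ≤ n) (A : Fin n → Set Ω) (hmeas : ∀ i, MeasurableSet (A i))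
    (α : ℝ) (hα0 : 0 < α) (hα1 : α ≤ 1)
    (s : ℕ) (hs : s ≤ n - 1)
    (hA : ∀ i, (μ (A i)).toReal = α)
    (hbad : ∀ i, ∃ bad : Finset (Fin n), bad.card ≤ s ∧ i ∉ bad ∧
      ∀ j, j ≠ i →
        (j ∈ bad → (μ (A i ∩ A j)).toReal ≤ α) ∧
        (j ∉ bad → (μ (A i ∩ A j)).toReal = α ^ 2)) :
    (n : ℝ) * α / (((n : ℝ) - 1 - s) * α + (s + 1)) ≤ (μ (⋃ i, A i)).toReal ∧
      (n : ℝ) * α / ((n : ℝ) * α + (s + 1))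
        ≤ (n : ℝ) * α / (((n : ℝ) - 1 - s) * α + (s + 1)) := by
  have hsR : (s : ℝ) ≤ (n : ℝ) - 1 := by
    have h := (Nat.cast_le (α := ℝ)).2 hs
    rwa [Nat.cast_sub (by omega), Nat.cast_one] at h
  set D : ℝ := ((n : ℝ) - 1 - s) * α + (s + 1) with hDdef
  clear_value D
  have hD0 : 0 < D := by
    have h1 : 0 ≤ ((n : ℝ) - 1 - s) * α := mul_nonneg (by linarith) hα0.le
    have h2 : (0:ℝ) ≤ s := Nat.cast_nonneg s
    simp only [hDdef]; linarith
  -- indicator machinery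
  have hint : ∀ (B : Set Ω), MeasurableSet B → Integrable (B.indicator (1 : Ω → ℝ)) μ :=
    fun B hB => (integrable_const 1).indicator hB
  set f : Ω → ℝ := fun ω => ∑ i, (A i).indicator (1 : Ω → ℝ) ω with hfdef
  have hf_int : Integrable f μ := integrable_finset_sum _ (fun i _ => hint _ (hmeas i))
  have hfsq : ∀ ω, f ω ^ 2 = ∑ i, ∑ j, ((A i ∩ A j).indicator (1 : Ω → ℝ) ω) := by
    intro ω
    simp only [hfdef, sq, Finset.sum_mul_sum]
    refine Finset.sum_congr rfl fun i _ => Finset.sum_congr rfl fun j _ => ?_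
    rw [Set.inter_indicator_one, Pi.mul_apply]
  have hg_int : Integrable (fun ω => f ω ^ 2) μ := by
    have : (fun ω => f ω ^ 2)
        = fun ω => ∑ i, ∑ j, ((A i ∩ A j).indicator (1 : Ω → ℝ) ω) := funext hfsq
    rw [this]
    exact integrable_finset_sum _ fun i _ =>
      integrable_finset_sum _ fun j _ => hint _ ((hmeas i).inter (hmeas j))
  -- first moment
  have hI1 : ∫ ω, f ω ∂μ = (n : ℝ) * α := by
    simp only [hfdef]
    rw [integral_finset_sum _ fun i _ => hint _ (hmeas i)]
    have : ∀ i : Fin n, ∫ ω, (A i).indicator (1 : Ω → ℝ) ω ∂μ = α := by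
      intro i; rw [integral_indicator_one (hmeas i)]; exact hA i
    rw [Finset.sum_congr rfl fun i _ => this i]
    simp [Finset.card_univ]
  -- per-row bound on the second moment
  have key : ∀ i : Fin n, ∑ j, (μ (A i ∩ A j)).toReal ≤ α * D := by
    intro i
    obtain ⟨bad, hcard, hib, hprop⟩ := hbad i
    have hsub : bad ⊆ Finset.univ.erase i := fun j hj =>
      Finset.mem_erase.2 ⟨fun h => hib (h ▸ hj), Finset.mem_univ j⟩
    rw [← Finset.add_sum_erase _ _ (Finset.mem_univ i)]
    have hdiag : (μ (A i ∩ A i)).toReal = α := by rw [Set.inter_self]; exact hA i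
    rw [hdiag, ← Finset.sum_sdiff hsub]
    have hbadsum : ∑ j ∈ bad, (μ (A i ∩ A j)).toReal ≤ (bad.card : ℝ) * α := by
      have := Finset.sum_le_card_nsmul bad (fun j => (μ (A i ∩ A j)).toReal) α
        (fun j hj => (hprop j (fun h => hib (h ▸ hj))).1 hj)
      simpa [nsmul_eq_mul] using this
    have hgoodsum : ∑ j ∈ (Finset.univ.erase i) \ bad, (μ (A i ∩ A j)).toReal
        = ((n - 1 - bad.card : ℕ) : ℝ) * α ^ 2 := by
      have heach : ∀ j ∈ (Finset.univ.erase i) \ bad, (μ (A i ∩ A j)).toReal = α ^ 2 := by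
        intro j hj
        obtain ⟨hj1, hj2⟩ := Finset.mem_sdiff.1 hj
        exact (hprop j (Finset.ne_of_mem_erase hj1)).2 hj2
      rw [Finset.sum_congr rfl heach, Finset.sum_const, Finset.card_sdiff_of_subset hsub,
        Finset.card_erase_of_mem (Finset.mem_univ i), Finset.card_univ, Fintype.card_fin,
        nsmul_eq_mul]
    rw [hgoodsum]
    have hcard' : bad.card ≤ n - 1 := le_trans hcard hs
    have hcast : ((n - 1 - bad.card : ℕ) : ℝ) = (n : ℝ) - 1 - bad.card := by
      rw [Nat.cast_sub hcard', Nat.cast_sub (by omega), Nat.cast_one]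
    rw [hcast]
    have hcardR : (bad.card : ℝ) ≤ s := Nat.cast_le.2 hcard
    have hkey : 0 ≤ ((s : ℝ) - bad.card) * α * (1 - α) :=
      mul_nonneg (mul_nonneg (by linarith) hα0.le) (by linarith)
    simp only [hDdef]
    nlinarith [hkey]
  -- second moment
  have hI2 : ∫ ω, f ω ^ 2 ∂μ ≤ (n : ℝ) * (α * D) := by
    have heq : ∫ ω, f ω ^ 2 ∂μ = ∑ i, ∑ j, (μ (A i ∩ A j)).toReal := by
      rw [funext hfsq]
      rw [integral_finset_sum _ fun i _ =>
        integrable_finset_sum _ fun j _ => hint _ ((hmeas i).inter (hmeas j))]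
      refine Finset.sum_congr rfl fun i _ => ?_
      rw [integral_finset_sum _ fun j _ => hint _ ((hmeas i).inter (hmeas j))]
      exact Finset.sum_congr rfl fun j _ => integral_indicator_one ((hmeas i).inter (hmeas j))
    rw [heq]
    have := Finset.sum_le_card_nsmul Finset.univ (fun i => ∑ j, (μ (A i ∩ A j)).toReal)
      (α * D) (fun i _ => key i)
    simpa [Finset.card_univ, nsmul_eq_mul] using this
  -- the union
  set U : Set Ω := ⋃ i, A i with hUdef
  have hU : MeasurableSet U := MeasurableSet.iUnion fun i => hmeas i
  have hpt : ∀ ω, f ω ≤ f ω ^ 2 / (2 * D) + (D / 2) * U.indicator (1 : Ω → ℝ) ω := by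
    intro ω
    by_cases hω : ω ∈ U
    · rw [Set.indicator_of_mem hω, Pi.one_apply]
      have h1 : f ω * (2 * D) ≤ f ω ^ 2 + D ^ 2 := by nlinarith [sq_nonneg (f ω - D)]
      have h2D : (0:ℝ) < 2 * D := by linarith
      calc f ω = f ω * (2 * D) / (2 * D) := by field_simp
        _ ≤ (f ω ^ 2 + D ^ 2) / (2 * D) := by
            exact div_le_div_of_nonneg_right h1 h2D.le
        _ = f ω ^ 2 / (2 * D) + D / 2 * 1 := by field_simp
    · have hf0 : f ω = 0 := by
        simp only [hfdef]
        refine Finset.sum_eq_zero fun i _ => Set.indicator_of_notMem ?_ _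
        exact fun h => hω (Set.mem_iUnion.2 ⟨i, h⟩)
      rw [hf0, Set.indicator_of_notMem hω]
      have : (0:ℝ) ^ 2 / (2 * D) + D / 2 * 0 = 0 := by ring
      rw [this]
  have hint_rhs : Integrable (fun ω => f ω ^ 2 / (2 * D) + (D / 2) * U.indicator (1 : Ω → ℝ) ω) μ :=
    (hg_int.div_const _).add ((hint U hU).const_mul _)
  have hmono := integral_mono hf_int hint_rhs hpt
  rw [integral_add (hg_int.div_const _) ((hint U hU).const_mul _), integral_div,
    integral_const_mul, integral_indicator_one hU, hI1] at hmono
  have hμU : (n : ℝ) * α ≤ D * (μ U).toReal := by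
    have h1 : (∫ ω, f ω ^ 2 ∂μ) / (2 * D) ≤ (n : ℝ) * (α * D) / (2 * D) :=
      div_le_div_of_nonneg_right hI2 (by linarith)
    have h2 : (n : ℝ) * (α * D) / (2 * D) = (n : ℝ) * α / 2 := by
      field_simp
    have h3 : (∫ ω, f ω ^ 2 ∂μ) / (2 * D) ≤ (n : ℝ) * α / 2 := by rw [← h2]; exact h1
    rw [measureReal_def] at hmono
    linarith [hmono, h3]
  constructor
  · rw [div_le_iff₀ hD0]
    linarith [hμU, mul_comm D (μ U).toReal]
  · have hnα : 0 < (n : ℝ) * α := by positivity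
    apply div_le_div_of_nonneg_left hnα.le hD0
    have : ((n : ℝ) - 1 - s) * α ≤ (n : ℝ) * α := by nlinarith [Nat.cast_nonneg (α := ℝ) s]
    simp only [hDdef]; linarith
end

section
/- Let $\mathbf{x}_m$ be a codeword of the random linear ensemble with $q^K > 2$, let $\mathbf{y}$ be a fixed channel output, and let $A_{m'}(\mathbf{x}_m, \mathbf{y})$ denote the event that codeword $\mathbf{x}_{m'}$ ($m' \neq m$) lies in the set $A(\mathbf{x}_m, \mathbf{y}) = \{\mathbf{x}' : P_N(\mathbf{y}|\mathbf{x}') \geq P_N(\mathbf{y}|\mathbf{x}_m)\}$, with $\alpha = \Pr(A_{m'}(\mathbf{x}_m, \mathbf{y}))$. Then: (a) if $\mathbf{u}_m \notin \mathrm{span}^*(\mathbf{u}_{m'}, \mathbf{u}_{m''})$, then $\Pr(A_{m'}(\mathbf{x}_m, \mathbf{y}) \cap A_{m''}(\mathbf{x}_m, \mathbf{y})) = \alpha^2$; (b) if $\mathbf{u}_m \in \mathrm{span}^*(\mathbf{u}_{m'}, \mathbf{u}_{m''})$, then $\Pr(A_{m'}(\mathbf{x}_m, \mathbf{y}) \cap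 A_{m''}(\mathbf{x}_m, \mathbf{y})) \leq \alpha$. -/
open ProbabilityTheory MeasureTheory

set_option linter.unusedSectionVars false
set_option maxHeartbeats 1000000

section aux
variable {F : Type*} [Field F] [Fintype F] [DecidableEq F] {k n : ℕ}

lemma count_eq_nat_card' {Ω : Type*} [Fintype Ω] (s : Set Ω) :
    @Measure.count Ω ⊤ s = (Nat.card s : ENNReal) := by
  rw [@Measure.count_apply_finite' Ω ⊤ s s.toFinite MeasurableSpace.measurableSet_top]
  rw [← Set.ncard_eq_toFinset_card s s.toFinite, Nat.card_coe_set_eq]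

lemma card_preimage' {V W : Type*} [AddCommGroup V] [Module F V] [AddCommGroup W] [Module F W]
    (T : V →ₗ[F] W) (hT : Function.Surjective T) (S : Set W) :
    Nat.card (T ⁻¹' S) = Nat.card (LinearMap.ker T) * Nat.card S := by
  obtain ⟨σ, hσ⟩ := T.exists_rightInverse_of_surjective (LinearMap.range_eq_top.2 hT)
  have hσ' : ∀ w, T (σ w) = w := fun w => congrArg (fun f => f w) (congrArg DFunLike.coe hσ)
  have e : (T ⁻¹' S) ≃ (LinearMap.ker T) × S :=
  { toFun := fun x => (⟨x.1 - σ (T x.1), by simp [LinearMap.mem_ker, hσ']⟩, ⟨T x.1, x.2⟩)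
    invFun := fun ks => ⟨ks.1.1 + σ ks.2.1, by
      have h1 : T ks.1.1 = 0 := ks.1.2
      have : T (ks.1.1 + σ ks.2.1) = ks.2.1 := by simp [h1, hσ']
      simp only [Set.mem_preimage, this]; exact ks.2.2⟩
    left_inv := fun x => by ext; simp
    right_inv := fun ks => by
      have h1 : T ks.1.1 = 0 := ks.1.2
      ext <;> simp [h1, hσ'] }
  rw [Nat.card_congr e, Nat.card_prod]

/-- The linear map `G ↦ a ᵥ* G` in the matrix argument. -/
def rowMul (a : Fin k → F) : Matrix (Fin k) (Fin n) F →ₗ[F] (Fin n → F) where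
  toFun G := Matrix.vecMul a G
  map_add' G H := by
    ext j
    simp [Matrix.vecMul, dotProduct, mul_add, Finset.sum_add_distrib]
  map_smul' r G := by
    ext j
    simp [Matrix.vecMul, dotProduct, Finset.mul_sum, mul_left_comm]

lemma rowMul_surjective {a : Fin k → F} (ha : a ≠ 0) :
    Function.Surjective (rowMul (n := n) a) := by
  obtain ⟨i0, hi0⟩ : ∃ i, a i ≠ 0 := by
    by_contra h
    push_neg at h
    exact ha (funext h)
  intro z
  refine ⟨fun i j => if i = i0 then (a i0)⁻¹ * z j else 0, ?_⟩
  ext j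
  simp only [rowMul, LinearMap.coe_mk, AddHom.coe_mk, Matrix.vecMul, dotProduct,
    mul_ite, mul_zero]
  rw [Finset.sum_ite_eq' Finset.univ i0]
  simp [hi0]

lemma exists_dual {a b : Fin k → F}
    (hli : LinearIndependent F ![a, b]) :
    ∃ c d : Fin k → F, (∑ i, a i * c i) = 1 ∧ (∑ i, b i * c i) = 0
      ∧ (∑ i, a i * d i) = 0 ∧ (∑ i, b i * d i) = 1 := by
  have hab : a ≠ b := by
    intro h
    have := LinearIndependent.pair_iff.1 hli 1 (-1) (by simp [h])
    simp at this
  have h := (linearIndepOn_id_range_iff hli.injective).mpr hli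
  let B := Module.Basis.extend h
  have ha : a ∈ h.extend (Set.subset_univ _) := h.subset_extend _ ⟨0, rfl⟩
  have hb : b ∈ h.extend (Set.subset_univ _) := h.subset_extend _ ⟨1, rfl⟩
  have key : ∀ (x : Fin k → F) (φ : (Fin k → F) →ₗ[F] F),
      φ x = ∑ i, x i * φ (Pi.single i 1) := by
    intro x φ
    have hx : x = ∑ i, x i • (Pi.single i 1 : Fin k → F) := by
      ext j
      simp [Pi.single_apply, Finset.sum_ite_eq' Finset.univ j]
    conv_lhs => rw [hx]
    simp [map_sum]
  refine ⟨fun i => B.coord ⟨a, ha⟩ (Pi.single i 1), fun i => B.coord ⟨b, hb⟩ (Pi.single i 1),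
    ?_, ?_, ?_, ?_⟩
  · rw [← key a]
    have h2 : (B.coord ⟨a, ha⟩) (B ⟨a, ha⟩) = 1 := by simp [Module.Basis.coord_apply]
    rwa [Module.Basis.extend_apply_self] at h2
  · rw [← key b]
    have h2 : (B.coord ⟨a, ha⟩) (B ⟨b, hb⟩) = 0 := by
      simp [Module.Basis.coord_apply, Finsupp.single_apply, Subtype.ext_iff, hab, Ne.symm hab]
    rw [Module.Basis.extend_apply_self] at h2
    exact h2
  · rw [← key a]
    have h2 : (B.coord ⟨b, hb⟩) (B ⟨a, ha⟩) = 0 := by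
      simp [Module.Basis.coord_apply, Finsupp.single_apply, Subtype.ext_iff, hab, Ne.symm hab]
    rw [Module.Basis.extend_apply_self] at h2
    exact h2
  · rw [← key b]
    have h2 : (B.coord ⟨b, hb⟩) (B ⟨b, hb⟩) = 1 := by simp [Module.Basis.coord_apply]
    rwa [Module.Basis.extend_apply_self] at h2

lemma pair_surjective {a b : Fin k → F} (hli : LinearIndependent F ![a, b]) :
    Function.Surjective ((rowMul (n := n) a).prod (rowMul (n := n) b)) := by
  obtain ⟨c, d, hc1, hc0, hd0, hd1⟩ := exists_dual hli
  rintro ⟨z, w⟩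
  refine ⟨fun i j => c i * z j + d i * w j, ?_⟩
  have hgen : ∀ (u : Fin k → F), Matrix.vecMul u (fun i j => c i * z j + d i * w j)
      = fun j => (∑ i, u i * c i) * z j + (∑ i, u i * d i) * w j := by
    intro u
    ext j
    simp only [Matrix.vecMul, dotProduct, mul_add, Finset.sum_add_distrib,
      Finset.sum_mul]
    congr 1 <;> · apply Finset.sum_congr rfl; intro i _; ring
  simp only [LinearMap.prod_apply, LinearMap.coe_prod, Function.prod, Pi.prod, Prod.mk.injEq, rowMul, LinearMap.coe_mk,
    AddHom.coe_mk]
  constructor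
  · rw [hgen a]; ext j; rw [hc1, hd0]; ring
  · rw [hgen b]; ext j; rw [hc0, hd1]; ring

lemma card_slice {K N : ℕ} (um : Fin K → F) (xm : Fin N → F)
    (S : Set (Matrix (Fin K) (Fin N) F × (Fin N → F))) :
    Nat.card (({ω | Matrix.vecMul um ω.1 + ω.2 = xm} ∩ S : Set _)) =
      Nat.card {G | (G, xm - Matrix.vecMul um G) ∈ S} := by
  apply Nat.card_congr
  have key : ∀ x : ({ω | Matrix.vecMul um ω.1 + ω.2 = xm} ∩ S : Set _),
      xm - Matrix.vecMul um x.1.1 = x.1.2 := fun x => sub_eq_of_eq_add' (x.2.1).symm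
  refine ⟨fun x => ⟨x.1.1, ?_⟩,
    fun G => ⟨(G.1, xm - Matrix.vecMul um G.1), ⟨by simp only [Set.mem_setOf_eq]; abel, G.2⟩⟩,
    fun x => ?_, fun G => Subtype.ext rfl⟩
  · show (x.1.1, xm - Matrix.vecMul um x.1.1) ∈ S
    rw [key x, Prod.mk.eta]
    exact x.2.2
  · apply Subtype.ext
    show (x.1.1, xm - Matrix.vecMul um x.1.1) = x.1
    rw [key x]

lemma enn_calc (kk n p : ℕ) (hk : kk ≠ 0) :
    ((kk * n : ℕ) : ENNReal)⁻¹ * ((kk * p : ℕ) : ENNReal)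
      = (p : ENNReal) * ((n : ENNReal))⁻¹ := by
  push_cast
  rw [ENNReal.mul_inv (Or.inl (by exact_mod_cast hk)) (Or.inl (ENNReal.natCast_ne_top kk))]
  calc ((kk : ENNReal))⁻¹ * ((n : ENNReal))⁻¹ * ((kk : ENNReal) * (p : ENNReal))
      = ((kk : ENNReal)⁻¹ * (kk : ENNReal)) * ((p : ENNReal) * ((n : ENNReal))⁻¹) := by ring
    _ = (p : ENNReal) * ((n : ENNReal))⁻¹ := by
        rw [ENNReal.inv_mul_cancel (by exact_mod_cast hk) (ENNReal.natCast_ne_top kk), one_mul]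

end aux

/-- pairwise intersection of error events, random linear ensemble:
Messages `u` map to codewords `uG + v` with `(G, v)` uniform. Fix a channel output via its
likelihood function `W x = P_N(y|x)`, a transmitted codeword `xm` for message `um`
(conditioning on the event `um·G + v = xm`), and distinct messages `um, um', um''` with
`q^K > 2`. Writing `A_{m'}` for the event that the codeword of `m'` is at least as likely
as `xm`, and `α = Pr(A_{m'} | xm)`: (a) if `um ∉ span*(um', um'')` then
`Pr(A_{m'} ∩ A_{m''} | xm) = α²`; (b) if `um ∈ span*(um', um'')` then
`Pr(A_{m'} ∩ A_{m''} | xm) ≤ α`. -/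
theorem stmt12 (q K N : ℕ) (F : Type*) [Field F] [Fintype F] [DecidableEq F]
    (hq : Fintype.card F = q) (hqK : 2 < q ^ K)
    (W : (Fin N → F) → ℝ)
    (um um' um'' : Fin K → F)
    (h1 : um ≠ um') (h2 : um ≠ um'') (h3 : um' ≠ um'')
    (xm : Fin N → F)
    (enc : (Fin K → F) → Matrix (Fin K) (Fin N) F × (Fin N → F) → (Fin N → F))
    (henc : ∀ u ω, enc u ω = Matrix.vecMul u ω.1 + ω.2)
    (C : Set (Matrix (Fin K) (Fin N) F × (Fin N → F)))
    (hC : C = {ω | enc um ω = xm})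
    (A : (Fin K → F) → Set (Matrix (Fin K) (Fin N) F × (Fin N → F)))
    (hA : ∀ u', A u' = {ω | W xm ≤ W (enc u' ω)})
    (α : ENNReal)
    (hα : α = @uniformOn _ ⊤ C (A um')) :
    (um ∉ (fun w => um' + w) '' (Submodule.span F {um'' - um'} : Set (Fin K → F)) →
        @uniformOn _ ⊤ C (A um' ∩ A um'') = α ^ 2) ∧
    (um ∈ (fun w => um' + w) '' (Submodule.span F {um'' - um'} : Set (Fin K → F)) →
        @uniformOn _ ⊤ C (A um' ∩ A um'') ≤ α) := by
  constructor
  · -- part (a)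
    intro hspan
    -- linear independence of um' - um and um'' - um
    have hli : LinearIndependent F ![um' - um, um'' - um] := by
      rw [LinearIndependent.pair_iff]
      intro s t hst
      have h4 : s • um' + t • um'' = (s + t) • um := by
        rw [smul_sub, smul_sub] at hst
        calc s • um' + t • um''
            = (s • um' - s • um + (t • um'' - t • um)) + (s • um + t • um) := by abel
          _ = (s + t) • um := by rw [hst, zero_add, add_smul]
      by_cases hs : s + t = 0
      · have ht : t = -s := by
          have := hs
          rwa [add_comm, add_eq_zero_iff_eq_neg] at this
        rw [hs, zero_smul] at h4
        have hz : s • (um' - um'') = 0 := by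
          rw [smul_sub]
          rw [ht, neg_smul, ← sub_eq_add_neg] at h4
          exact h4
        rcases smul_eq_zero.1 hz with h | h
        · exact ⟨h, by rw [ht, h, neg_zero]⟩
        · exact absurd (sub_eq_zero.1 h) h3
      · exfalso
        apply hspan
        refine ⟨((s + t)⁻¹ * t) • (um'' - um'), Submodule.smul_mem _ _
          (Submodule.mem_span_singleton_self _), ?_⟩
        show um' + ((s + t)⁻¹ * t) • (um'' - um') = um
        ext i
        have hi := congrFun h4 i
        simp only [Pi.add_apply, Pi.smul_apply, smul_eq_mul] at hi
        simp only [Pi.add_apply, Pi.smul_apply, Pi.sub_apply, smul_eq_mul]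
        field_simp
        linear_combination hi
    -- counting setup
    have hC' : C = {ω | Matrix.vecMul um ω.1 + ω.2 = xm} := by
      rw [hC]; ext ω; simp [henc]
    set PS : Set (Fin N → F) := {z | W xm ≤ W (xm + z)} with hPS
    have hsliceA : ∀ u' : Fin K → F,
        {G : Matrix (Fin K) (Fin N) F | (G, xm - Matrix.vecMul um G) ∈ A u'} =
          (rowMul (u' - um)) ⁻¹' PS := by
      intro u'
      ext G
      have hx : Matrix.vecMul u' G + (xm - Matrix.vecMul um G)
          = xm + Matrix.vecMul (u' - um) G := by
        rw [Matrix.sub_vecMul]; abel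
      simp only [Set.mem_setOf_eq, hA, henc, Set.mem_preimage, hx]
      exact Iff.rfl
    have ha0 : um' - um ≠ 0 := sub_ne_zero.2 (Ne.symm h1)
    have hTa := rowMul_surjective (n := N) ha0
    have hTab := pair_surjective (n := N) hli
    set p : ℕ := Nat.card PS with hp
    set n : ℕ := Nat.card (Fin N → F) with hn
    set ka : ℕ := Nat.card (LinearMap.ker (rowMul (n := N) (um' - um))) with hka
    set kab : ℕ := Nat.card
      (LinearMap.ker ((rowMul (n := N) (um' - um)).prod (rowMul (n := N) (um'' - um)))) with hkab
    have hka0 : ka ≠ 0 := Nat.card_pos.ne'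
    have hkab0 : kab ≠ 0 := Nat.card_pos.ne'
    have hMn : Nat.card (Matrix (Fin K) (Fin N) F) = ka * n := by
      have h := card_preimage' (rowMul (n := N) (um' - um)) hTa Set.univ
      rw [Set.preimage_univ] at h
      simp only [Nat.card_coe_set_eq, Set.ncard_univ] at h
      exact h
    have hMn2 : Nat.card (Matrix (Fin K) (Fin N) F) = kab * (n * n) := by
      have h := card_preimage'
        ((rowMul (n := N) (um' - um)).prod (rowMul (n := N) (um'' - um))) hTab Set.univ
      rw [Set.preimage_univ] at h
      simp only [Nat.card_coe_set_eq, Set.ncard_univ] at h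
      rw [h, Nat.card_prod]
    have hCcard : Nat.card C = Nat.card (Matrix (Fin K) (Fin N) F) := by
      have h := card_slice (F := F) um xm Set.univ
      rw [Set.inter_univ] at h
      have h2 : {G : Matrix (Fin K) (Fin N) F | (G, xm - Matrix.vecMul um G) ∈ Set.univ}
          = Set.univ := by ext G; simp
      rw [hC', h, h2, Nat.card_coe_set_eq, Set.ncard_univ]
    have hCA' : Nat.card (C ∩ A um' : Set _) = ka * p := by
      rw [hC', card_slice, hsliceA um', card_preimage' _ hTa]
    have hset : {G : Matrix (Fin K) (Fin N) F | (G, xm - Matrix.vecMul um G) ∈ A um' ∩ A um''}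
        = ((rowMul (um' - um)).prod (rowMul (um'' - um))) ⁻¹' (PS ×ˢ PS) := by
      ext G
      have e1 := Set.ext_iff.1 (hsliceA um') G
      have e2 := Set.ext_iff.1 (hsliceA um'') G
      simp only [Set.mem_setOf_eq, Set.mem_preimage] at e1 e2
      simp only [Set.mem_setOf_eq, Set.mem_inter_iff, Set.mem_preimage, LinearMap.prod_apply,
        Pi.prod, Set.mem_prod]
      exact and_congr e1 e2
    have hCAA : Nat.card (C ∩ (A um' ∩ A um'') : Set _) = kab * (p * p) := by
      rw [hC', card_slice, hset, card_preimage' _ hTab]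
      congr 1
      rw [Nat.card_congr (Equiv.Set.prod PS PS), Nat.card_prod]
    have huni : ∀ t : Set (Matrix (Fin K) (Fin N) F × (Fin N → F)),
        @uniformOn _ ⊤ C t
          = ((Nat.card C : ENNReal))⁻¹ * (Nat.card (C ∩ t : Set _) : ENNReal) := by
      intro t
      have h0 := @cond_apply _ ⊤ C MeasurableSpace.measurableSet_top (@Measure.count _ ⊤) t
      rw [count_eq_nat_card', count_eq_nat_card'] at h0
      exact h0
    have hAa : @uniformOn _ ⊤ C (A um') = (p : ENNReal) * ((n : ENNReal))⁻¹ := by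
      rw [huni, hCcard, hMn, hCA']
      exact_mod_cast enn_calc ka n p hka0
    have hjoint : @uniformOn _ ⊤ C (A um' ∩ A um'')
        = ((p * p : ℕ) : ENNReal) * (((n * n : ℕ) : ENNReal))⁻¹ := by
      rw [huni, hCcard, hMn2, hCAA]
      exact_mod_cast enn_calc kab (n * n) (p * p) hkab0
    rw [hjoint, hα, hAa]
    push_cast
    rw [ENNReal.mul_inv (Or.inr (ENNReal.natCast_ne_top n)) (Or.inl (ENNReal.natCast_ne_top n))]
    ring
  · -- part (b)
    intro _
    rw [hα]
    exact measure_mono Set.inter_subset_left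
end

section
/- Let $\mathbf{x}_m$ be a codeword of the random linear ensemble with $M = q^K > 2$, $\mathbf{y}$ a fixed channel output, $\alpha = \Pr(A_{m'}(\mathbf{x}_m, \mathbf{y}))$, and $\rho \geq 1$ a constant. Then $\frac{(M-1)\alpha}{q} - [(M-1)\alpha]^\rho \leq \Pr\left(\bigcup_{m' \neq m} A_{m'}(\mathbf{x}_m, \mathbf{y})\right) \leq (M-1)\alpha$. -/
open ProbabilityTheory MeasureTheory Finset

section Helpers

open Finset

lemma fiber_card_const {V W : Type*} [Fintype V] [DecidableEq W]
    [AddCommGroup V] [AddCommGroup W] (f : V →+ W) (hf : Function.Surjective f) (w : W) :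
    (univ.filter (fun v => f v = w)).card = (univ.filter (fun v => f v = 0)).card := by
  obtain ⟨x₀, hx₀⟩ := hf w
  apply Finset.card_bij' (fun v _ => v - x₀) (fun v _ => v + x₀)
  · intro a ha; simp only [mem_filter, mem_univ, true_and] at ha ⊢
    simp [map_sub, ha, hx₀]
  · intro a ha; simp only [mem_filter, mem_univ, true_and] at ha ⊢
    simp [map_add, ha, hx₀]
  · intros; simp
  · intros; simp

lemma preimage_card_mul {V W : Type*} [Fintype V] [Fintype W] [DecidableEq W]
    [AddCommGroup V] [AddCommGroup W] (f : V →+ W) (hf : Function.Surjective f)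
    (S : Finset W) :
    (univ.filter (fun v => f v ∈ S)).card * Fintype.card W = S.card * Fintype.card V := by
  classical
  set c := (univ.filter (fun v => f v = (0:W))).card with hc
  have sum1 : ∀ T : Finset W, (univ.filter (fun v => f v ∈ T)).card = T.card * c := by
    intro T
    rw [Finset.card_eq_sum_card_fiberwise (f := f) (s := univ.filter (fun v => f v ∈ T)) (t := T)
      (fun x hx => (mem_filter.mp hx).2)]
    rw [show T.card * c = ∑ _w ∈ T, c from by rw [Finset.sum_const, smul_eq_mul]]
    apply Finset.sum_congr rfl
    intro w hw
    have : (filter (fun x => f x ∈ T) univ).filter (fun a => f a = w)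
        = univ.filter (fun v => f v = w) := by
      ext v
      simp only [mem_filter, mem_univ, true_and, and_iff_right_iff_imp, filter_filter]
      rintro rfl; exact hw
    rw [this, fiber_card_const f hf w]
  have h2 : Fintype.card V = Fintype.card W * c := by
    have := sum1 univ
    simpa [Finset.filter_true_of_mem] using this
  rw [sum1 S, h2]; ring

open Finset

set_option linter.unusedSectionVars false
set_option maxHeartbeats 1000000
variable {K N : ℕ} {F : Type*} [Field F] [Fintype F] [DecidableEq F]

lemma dot_single (e : Fin K → F) (i : Fin K) (x : F) :
    ∑ k, e k * (Pi.single i x : Fin K → F) k = e i * x := by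
  rw [Finset.sum_eq_single i]
  · simp
  · intro b _ hb; simp [Pi.single_apply, hb]
  · simp

lemma dot_expand (e : Fin K → F) (s₁ s₂ : F) (w₁ w₂ : Fin K → F) :
    ∑ k, e k * (s₁ • w₁ + s₂ • w₂) k
      = s₁ * (∑ k, e k * w₁ k) + s₂ * (∑ k, e k * w₂ k) := by
  simp only [Pi.add_apply, Pi.smul_apply, smul_eq_mul, Finset.mul_sum]
  rw [← Finset.sum_add_distrib]
  apply Finset.sum_congr rfl; intros; ring

lemma pair_surj (d d' : Fin K → F) (hd : d ≠ 0) (hprop : ∀ c : F, d' ≠ c • d)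
    (a b : F) : ∃ v : Fin K → F, (∑ k, d k * v k) = a ∧ (∑ k, d' k * v k) = b := by
  obtain ⟨i, hi⟩ : ∃ i, d i ≠ 0 := by
    by_contra h; push_neg at h; exact hd (funext h)
  set v₀ : Fin K → F := Pi.single i (d i)⁻¹ with hv₀def
  have hv₀ : (∑ k, d k * v₀ k) = 1 := by rw [dot_single]; field_simp
  set t := ∑ k, d' k * v₀ k with ht
  by_cases hcase : ∃ u : Fin K → F, (∑ k, d k * u k) = 0 ∧ (∑ k, d' k * u k) ≠ 0
  · obtain ⟨u, hu0, hu⟩ := hcase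
    refine ⟨a • v₀ + ((b - a*t) * (∑ k, d' k * u k)⁻¹) • u, ?_, ?_⟩
    · rw [dot_expand, hv₀, hu0]; ring
    · rw [dot_expand, ← ht, mul_assoc, inv_mul_cancel₀ hu, mul_one]; ring
  · push_neg at hcase
    exfalso
    apply hprop t
    funext k
    set u : Fin K → F := (1:F) • (Pi.single k 1 : Fin K → F) + (-(d k)) • v₀ with hu
    have h1 : (∑ j, d j * u j) = 0 := by
      rw [hu]
      rw [dot_expand, dot_single, hv₀]; ring
    have h2 := hcase _ h1
    rw [hu, dot_expand, dot_single] at h2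
    have : d' k = t * d k := by linear_combination h2
    simpa [this, mul_comm] using this

lemma single_surj_mat (d : Fin K → F) (hd : d ≠ 0) :
    Function.Surjective (fun G : Matrix (Fin K) (Fin N) F => Matrix.vecMul d G) := by
  intro a
  obtain ⟨i, hi⟩ : ∃ i, d i ≠ 0 := by
    by_contra h; push_neg at h; exact hd (funext h)
  refine ⟨Matrix.of fun k n => if k = i then (d i)⁻¹ * a n else 0, ?_⟩
  funext n
  simp only [Matrix.vecMul, dotProduct, Matrix.of_apply, mul_ite, mul_zero]
  rw [Finset.sum_ite_eq' univ i]
  simp only [mem_univ, if_true]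
  field_simp

lemma pair_surj_mat (d d' : Fin K → F) (hd : d ≠ 0) (hprop : ∀ c : F, d' ≠ c • d) :
    Function.Surjective (fun G : Matrix (Fin K) (Fin N) F =>
      (Matrix.vecMul d G, Matrix.vecMul d' G)) := by
  rintro ⟨a, b⟩
  choose v hv1 hv2 using fun n => pair_surj d d' hd hprop (a n) (b n)
  refine ⟨Matrix.of fun k n => v n k, ?_⟩
  ext n
  · simpa [Matrix.vecMul, dotProduct] using hv1 n
  · simpa [Matrix.vecMul, dotProduct] using hv2 n
open Finset

lemma filter_mem_of_subset {Ω : Type*} [DecidableEq Ω] {U T : Finset Ω} (h : T ⊆ U) :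
    U.filter (· ∈ T) = T := by
  ext ω; simp only [mem_filter, and_iff_right_iff_imp]; exact fun hω => h hω

lemma chung_erdos {ι Ω : Type*} [DecidableEq Ω] (I : Finset ι) (E : ι → Finset Ω) :
    (∑ i ∈ I, ((E i).card : ℝ))^2
      ≤ (I.biUnion E).card * ∑ i ∈ I, ∑ j ∈ I, (((E i) ∩ (E j)).card : ℝ) := by
  set U := I.biUnion E with hU
  set X : Ω → ℝ := fun ω => ∑ i ∈ I, (if ω ∈ E i then (1:ℝ) else 0) with hX
  have s1 : (∑ ω ∈ U, X ω) = ∑ i ∈ I, ((E i).card : ℝ) := by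
    rw [hX, Finset.sum_comm]
    refine Finset.sum_congr rfl fun i hi => ?_
    rw [Finset.sum_boole, filter_mem_of_subset (Finset.subset_biUnion_of_mem E hi)]
  have s2 : (∑ ω ∈ U, (X ω)^2) = ∑ i ∈ I, ∑ j ∈ I, (((E i) ∩ (E j)).card : ℝ) := by
    have expand : ∀ ω, (X ω)^2 = ∑ i ∈ I, ∑ j ∈ I, (if ω ∈ E i ∩ E j then (1:ℝ) else 0) := by
      intro ω
      rw [hX, sq, Finset.sum_mul_sum]
      refine Finset.sum_congr rfl fun i _ => Finset.sum_congr rfl fun j _ => ?_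
      by_cases h1 : ω ∈ E i <;> by_cases h2 : ω ∈ E j <;>
        simp [h1, h2, Finset.mem_inter]
    rw [Finset.sum_congr rfl fun ω _ => expand ω, Finset.sum_comm]
    refine Finset.sum_congr rfl fun i hi => ?_
    rw [Finset.sum_comm]
    refine Finset.sum_congr rfl fun j hj => ?_
    rw [Finset.sum_boole, filter_mem_of_subset
      ((Finset.inter_subset_left).trans (Finset.subset_biUnion_of_mem E hi))]
  calc (∑ i ∈ I, ((E i).card : ℝ))^2 = (∑ ω ∈ U, (1:ℝ) * X ω)^2 := by rw [← s1]; simp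
    _ ≤ (∑ ω ∈ U, (1:ℝ)^2) * ∑ ω ∈ U, (X ω)^2 := Finset.sum_mul_sq_le_sq_mul_sq U _ _
    _ = U.card * ∑ i ∈ I, ∑ j ∈ I, (((E i) ∩ (E j)).card : ℝ) := by rw [s2]; simp
open ProbabilityTheory MeasureTheory

lemma uniformOn_top_toReal {Ω' : Type*} [Fintype Ω'] (C t : Set Ω') (hne : C.Nonempty) :
    (@uniformOn Ω' ⊤ C t).toReal = (Nat.card ↑(C ∩ t) : ℝ) / (Nat.card ↑C : ℝ) := by
  letI : MeasurableSpace Ω' := ⊤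
  haveI : MeasurableSingletonClass Ω' := ⟨fun _ => trivial⟩
  have h := cond_apply (show MeasurableSet C from trivial) Measure.count t
  have hC : Measure.count C = ((Nat.card ↑C : ℕ) : ENNReal) := by
    rw [Measure.count_apply_finite C (Set.toFinite C)]
    congr 1
    rw [Nat.card_coe_set_eq, Set.ncard_eq_toFinset_card C (Set.toFinite C)]
  have hCt : Measure.count (C ∩ t) = ((Nat.card ↑(C ∩ t) : ℕ) : ENNReal) := by
    rw [Measure.count_apply_finite _ (Set.toFinite _)]
    congr 1
    rw [Nat.card_coe_set_eq, Set.ncard_eq_toFinset_card _ (Set.toFinite _)]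
  have hCne : (Nat.card ↑C : ℕ) ≠ 0 := by
    simp [Nat.card_coe_set_eq, Set.ncard_eq_toFinset_card C (Set.toFinite C),
      Set.Finite.toFinset_eq_empty, hne.ne_empty]
  show (uniformOn C t).toReal = _
  rw [uniformOn, h, hC, hCt]
  rw [ENNReal.toReal_mul, ENNReal.toReal_inv]
  simp [inv_mul_eq_div]

end Helpers

open Finset

set_option maxHeartbeats 2000000 in
/-- Lemma 2 of the paper: In the random linear ensemble with
`M = q^K > 2`, conditioned on the transmitted codeword (`um·G + v = xm`), with every
pairwise error event having probability `α` and `ρ ≥ 1`,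
`(M-1)α/q - ((M-1)α)^ρ ≤ Pr(⋃_{m' ≠ m} A_{m'}) ≤ (M-1)α`. -/
theorem stmt13 (q K N : ℕ) (F : Type*) [Field F] [Fintype F] [DecidableEq F]
    (hq : Fintype.card F = q) (M : ℕ) (hM : M = q ^ K) (hM2 : 2 < M)
    (W : (Fin N → F) → ℝ)
    (um : Fin K → F) (xm : Fin N → F)
    (enc : (Fin K → F) → Matrix (Fin K) (Fin N) F × (Fin N → F) → (Fin N → F))
    (henc : ∀ u ω, enc u ω = Matrix.vecMul u ω.1 + ω.2)
    (C : Set (Matrix (Fin K) (Fin N) F × (Fin N → F)))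
    (hC : C = {ω | enc um ω = xm})
    (A : (Fin K → F) → Set (Matrix (Fin K) (Fin N) F × (Fin N → F)))
    (hA : ∀ u', A u' = {ω | W xm ≤ W (enc u' ω)})
    (α : ℝ)
    (hα : ∀ u', u' ≠ um → (@uniformOn _ ⊤ C (A u')).toReal = α)
    (ρ : ℝ) (hρ : 1 ≤ ρ) :
    ((M : ℝ) - 1) * α / q - (((M : ℝ) - 1) * α) ^ ρ
        ≤ (@uniformOn _ ⊤ C (⋃ u' ∈ {u' : Fin K → F | u' ≠ um}, A u')).toReal ∧
      (@uniformOn _ ⊤ C (⋃ u' ∈ {u' : Fin K → F | u' ≠ um}, A u')).toReal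
        ≤ ((M : ℝ) - 1) * α := by
  classical
  have hq2 : 2 ≤ q := by rw [← hq]; exact Fintype.one_lt_card
  have hMK : Fintype.card (Fin K → F) = M := by simp [hM, hq]
  -- the parametrization of C
  set β : Matrix (Fin K) (Fin N) F → Matrix (Fin K) (Fin N) F × (Fin N → F) :=
    fun G => (G, xm - Matrix.vecMul um G) with hβ
  have hβinj : Function.Injective β := fun G H h => congrArg Prod.fst h
  have hench : ∀ (u' : Fin K → F) G, enc u' (β G) = Matrix.vecMul (u' - um) G + xm := by
    intro u' G
    rw [henc, hβ, Matrix.sub_vecMul]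
    show Matrix.vecMul u' G + (xm - Matrix.vecMul um G) = _
    abel
  -- finite-set versions of the events
  set T' : Finset (Fin N → F) := Finset.univ.filter (fun z => W xm ≤ W (z + xm)) with hT'
  set E : (Fin K → F) → Finset (Matrix (Fin K) (Fin N) F) :=
    fun u' => Finset.univ.filter (fun G => W xm ≤ W (Matrix.vecMul (u' - um) G + xm)) with hE
  set I' : Finset (Fin K → F) := Finset.univ.filter (· ≠ um) with hI'
  set U : Finset (Matrix (Fin K) (Fin N) F) := I'.biUnion E with hU
  have hmemI' : ∀ u', u' ∈ I' ↔ u' ≠ um := by intro u'; simp [hI']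
  have hCA : ∀ u', C ∩ A u' = β '' ↑(E u') := by
    intro u'
    ext ω
    constructor
    · rintro ⟨hc, ha'⟩
      rw [hC] at hc
      simp only [Set.mem_setOf_eq, henc] at hc
      have hω : ω = β ω.1 := by
        rw [hβ]
        conv_lhs => rw [show ω = (ω.1, ω.2) from rfl]
        exact congrArg (Prod.mk ω.1) (eq_sub_of_add_eq' hc)
      refine ⟨ω.1, ?_, hω.symm⟩
      rw [hA, hω, Set.mem_setOf_eq, hench u' ω.1] at ha'
      simp only [Finset.coe_filter, Set.mem_setOf_eq, hE, Finset.mem_coe, Finset.mem_filter,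
        Finset.mem_univ, true_and]
      exact ha'
    · rintro ⟨G, hG, rfl⟩
      refine ⟨?_, ?_⟩
      · rw [hC]
        simp only [Set.mem_setOf_eq, hench um G, sub_self, Matrix.zero_vecMul, zero_add]
      · rw [hA]
        simp only [Set.mem_setOf_eq, hench u' G]
        simpa [hE] using hG
  have hCU : C ∩ (⋃ u' ∈ {u' : Fin K → F | u' ≠ um}, A u') = β '' ↑U := by
    ext ω
    constructor
    · rintro ⟨hc, hu⟩
      rw [Set.mem_iUnion₂] at hu
      obtain ⟨u', hne, hA'⟩ := hu
      rw [Set.mem_setOf_eq] at hne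
      have hx : ω ∈ β '' ↑(E u') := by rw [← hCA u']; exact ⟨hc, hA'⟩
      obtain ⟨G, hG, rfl⟩ := hx
      exact ⟨G, Finset.mem_coe.2 (Finset.mem_biUnion.2
        ⟨u', (hmemI' u').2 hne, Finset.mem_coe.1 hG⟩), rfl⟩
    · rintro ⟨G, hG, rfl⟩
      rw [Finset.mem_coe, Finset.mem_biUnion] at hG
      obtain ⟨u', hu'I, hGE⟩ := hG
      have hne : u' ≠ um := (hmemI' u').1 hu'I
      have hx : β G ∈ C ∩ A u' := by
        rw [hCA u']; exact ⟨G, Finset.mem_coe.2 hGE, rfl⟩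
      exact ⟨hx.1, Set.mem_iUnion₂.2 ⟨u', hne, hx.2⟩⟩
  -- cardinalities
  set Vc : ℕ := Fintype.card (Matrix (Fin K) (Fin N) F) with hVc
  set Wc : ℕ := Fintype.card (Fin N → F) with hWc
  have hVc0 : 0 < Vc := Fintype.card_pos
  have hWc0 : 0 < Wc := Fintype.card_pos
  have hCrange : C = Set.range β := by
    rw [hC]
    ext ω
    simp only [Set.mem_setOf_eq, henc, Set.mem_range]
    constructor
    · intro h
      refine ⟨ω.1, ?_⟩
      conv_rhs => rw [show ω = (ω.1, ω.2) from rfl]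
      exact (congrArg (Prod.mk ω.1) (eq_sub_of_add_eq' h)).symm
    · rintro ⟨G, rfl⟩
      show Matrix.vecMul um G + (xm - Matrix.vecMul um G) = xm
      abel
  have hCne : C.Nonempty := hCrange ▸ Set.range_nonempty β
  have hNatC : (Nat.card ↑C : ℕ) = Vc := by
    rw [hCrange, ← Set.image_univ, Nat.card_coe_set_eq,
      Set.ncard_image_of_injective _ hβinj, Set.ncard_univ, Nat.card_eq_fintype_card]
  have hNatImg : ∀ s : Finset (Matrix (Fin K) (Fin N) F),
      (Nat.card ↑(β '' ↑s) : ℕ) = s.card := by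
    intro s
    rw [Nat.card_coe_set_eq, Set.ncard_image_of_injective _ hβinj, Set.ncard_coe_finset]
  -- additive homs
  set vecHom : (Fin K → F) → (Matrix (Fin K) (Fin N) F →+ (Fin N → F)) := fun d =>
    AddMonoidHom.mk' (fun G => Matrix.vecMul d G) (fun A B => Matrix.vecMul_add A B d)
    with hvecHom
  have hE_card : ∀ u', u' ≠ um → (E u').card * Wc = T'.card * Vc := by
    intro u' h
    have hd : u' - um ≠ 0 := sub_ne_zero.mpr h
    have hsurj : Function.Surjective (vecHom (u' - um)) := single_surj_mat _ hd
    have hpre := preimage_card_mul (vecHom (u' - um)) hsurj T'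
    have heq : E u' = Finset.univ.filter (fun G => (vecHom (u' - um)) G ∈ T') := by
      apply Finset.filter_congr
      intro G _
      simp [hT', hvecHom]
    rw [heq, hpre]
  -- there is at least one index ≠ um
  haveI : Nontrivial (Fin K → F) :=
    Fintype.one_lt_card_iff_nontrivial.mp (by rw [hMK]; omega)
  obtain ⟨u₀, hu₀⟩ := exists_ne um
  set a : ℕ := (E u₀).card with ha
  have hEa : ∀ u', u' ≠ um → (E u').card = a := by
    intro u' h
    apply Nat.eq_of_mul_eq_mul_right hWc0
    rw [hE_card u' h, ← hE_card u₀ hu₀]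
  have ha_mul : a * Wc = T'.card * Vc := by rw [ha, hE_card u₀ hu₀]
  -- intersections for non-proportional pairs
  have hInt : ∀ u' u'', u' ≠ um → u'' ≠ um →
      (∀ c : F, u'' - um ≠ c • (u' - um)) →
      ((E u' ∩ E u'').card) * Vc = a * a := by
    intro u' u'' h' h'' hprop
    have hd : u' - um ≠ 0 := sub_ne_zero.mpr h'
    set pairHom : Matrix (Fin K) (Fin N) F →+ ((Fin N → F) × (Fin N → F)) :=
      AddMonoidHom.mk' (fun G => (Matrix.vecMul (u' - um) G, Matrix.vecMul (u'' - um) G))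
        (fun A B => by simp [Matrix.vecMul_add, Prod.ext_iff]) with hpairHom
    have hsurj : Function.Surjective pairHom := pair_surj_mat _ _ hd hprop
    have hpre := preimage_card_mul pairHom hsurj (T' ×ˢ T')
    have heq : Finset.univ.filter (fun G => pairHom G ∈ T' ×ˢ T') = E u' ∩ E u'' := by
      ext G
      simp [hpairHom, hT', hE, Finset.mem_product, Finset.mem_inter]
    rw [heq, Fintype.card_prod, Finset.card_product, ← hWc] at hpre
    apply Nat.eq_of_mul_eq_mul_right (show 0 < Wc * Wc by positivity)
    calc ((E u' ∩ E u'').card * Vc) * (Wc * Wc)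
        = ((E u' ∩ E u'').card * (Wc * Wc)) * Vc := by ring
      _ = ((T'.card * T'.card) * Vc) * Vc := by rw [hpre]
      _ = (T'.card * Vc) * (T'.card * Vc) := by ring
      _ = (a * Wc) * (a * Wc) := by rw [ha_mul]
      _ = (a * a) * (Wc * Wc) := by ring
  -- value of α
  have hαval : α = (a : ℝ) / Vc := by
    rw [← hα u₀ hu₀, uniformOn_top_toReal _ _ hCne, hCA u₀, hNatImg, hNatC, ha]
  have hαnn : 0 ≤ α := by rw [hαval]; positivity
  -- value of the union probability
  have hPval : (@uniformOn _ ⊤ C (⋃ u' ∈ {u' : Fin K → F | u' ≠ um}, A u')).toReal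
      = (U.card : ℝ) / Vc := by
    rw [uniformOn_top_toReal _ _ hCne, hCU, hNatImg, hNatC]
  -- card of index set
  have hI'card : I'.card = M - 1 := by
    rw [hI', Finset.filter_ne', Finset.card_erase_of_mem (Finset.mem_univ _),
      Finset.card_univ, hMK]
  have hI'cardR : (I'.card : ℝ) = (M : ℝ) - 1 := by
    rw [hI'card, Nat.cast_sub (by omega : 1 ≤ M), Nat.cast_one]
  have hM1R : (0:ℝ) < (M : ℝ) - 1 := by
    have : (2:ℝ) < M := by exact_mod_cast hM2
    linarith
  -- abbreviations for the real quantities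
  set S : ℝ := ((M : ℝ) - 1) * α with hS
  set P : ℝ := (U.card : ℝ) / Vc with hP
  have hVcR : (0:ℝ) < (Vc : ℝ) := by exact_mod_cast hVc0
  have ha_eq : (a : ℝ) = α * Vc := by rw [hαval]; field_simp
  have hS0 : 0 ≤ S := mul_nonneg (le_of_lt hM1R) hαnn
  have hP0 : 0 ≤ P := by rw [hP]; exact div_nonneg (Nat.cast_nonneg _) (Nat.cast_nonneg _)
  have hqR : (2:ℝ) ≤ (q : ℝ) := by exact_mod_cast hq2
  rw [hPval]
  constructor
  · -- LOWER BOUND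
    -- Chung–Erdős
    have hCE := chung_erdos I' E
    have hsumE : (∑ u' ∈ I', ((E u').card : ℝ)) = ((M:ℝ) - 1) * a := by
      rw [Finset.sum_congr rfl (fun u' hu' => by
        rw [hEa u' ((hmemI' u').1 hu')]), Finset.sum_const, nsmul_eq_mul, hI'cardR]
    -- row bound
    have hrow : ∀ u' ∈ I', (∑ u'' ∈ I', (((E u' ∩ E u'').card : ℝ)))
        ≤ ((q:ℝ) - 1) * a + ((M:ℝ) - 1) * ((a : ℝ) * a / Vc) := by
      intro u' hu'
      have hu'ne : u' ≠ um := (hmemI' u').1 hu'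
      rw [← Finset.sum_filter_add_sum_filter_not I'
        (fun u'' => ∃ c : F, u'' - um = c • (u' - um))]
      have part1 : (∑ u'' ∈ I'.filter (fun u'' => ∃ c : F, u'' - um = c • (u' - um)),
          (((E u' ∩ E u'').card : ℝ))) ≤ ((q:ℝ) - 1) * a := by
        have hsub : I'.filter (fun u'' => ∃ c : F, u'' - um = c • (u' - um)) ⊆
            (Finset.univ.filter (fun c : F => c ≠ 0)).image
              (fun c => c • (u' - um) + um) := by
          intro u'' h
          rw [Finset.mem_filter] at h
          obtain ⟨hI, c, hc⟩ := h
          have hcne : c ≠ 0 := by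
            rintro rfl
            rw [zero_smul] at hc
            exact (hmemI' u'').1 hI (sub_eq_zero.mp hc)
          exact Finset.mem_image.2 ⟨c, Finset.mem_filter.2 ⟨Finset.mem_univ _, hcne⟩,
            by rw [← hc]; abel⟩
        have hcard : (I'.filter (fun u'' => ∃ c : F, u'' - um = c • (u' - um))).card
            ≤ q - 1 := by
          calc _ ≤ ((Finset.univ.filter (fun c : F => c ≠ 0)).image
                (fun c => c • (u' - um) + um)).card := Finset.card_le_card hsub
            _ ≤ (Finset.univ.filter (fun c : F => c ≠ 0)).card := Finset.card_image_le
            _ = q - 1 := by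
                rw [Finset.filter_ne', Finset.card_erase_of_mem (Finset.mem_univ _),
                  Finset.card_univ, hq]
        calc (∑ u'' ∈ I'.filter (fun u'' => ∃ c : F, u'' - um = c • (u' - um)),
            (((E u' ∩ E u'').card : ℝ)))
            ≤ ∑ u'' ∈ I'.filter (fun u'' => ∃ c : F, u'' - um = c • (u' - um)), (a : ℝ) := by
              apply Finset.sum_le_sum
              intro u'' h
              rw [Finset.mem_filter] at h
              have : (E u' ∩ E u'').card ≤ a := by
                rw [← hEa u'' ((hmemI' u'').1 h.1)]
                exact Finset.card_le_card Finset.inter_subset_right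
              exact_mod_cast this
          _ = ((I'.filter (fun u'' => ∃ c : F, u'' - um = c • (u' - um))).card : ℝ) * a := by
              rw [Finset.sum_const, nsmul_eq_mul]
          _ ≤ ((q:ℝ) - 1) * a := by
              apply mul_le_mul_of_nonneg_right _ (Nat.cast_nonneg _)
              have : ((q - 1 : ℕ) : ℝ) = (q:ℝ) - 1 := by
                rw [Nat.cast_sub (by omega : 1 ≤ q), Nat.cast_one]
              rw [← this]
              exact_mod_cast hcard
      have part2 : (∑ u'' ∈ I'.filter (fun u'' => ¬ ∃ c : F, u'' - um = c • (u' - um)),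
          (((E u' ∩ E u'').card : ℝ))) ≤ ((M:ℝ) - 1) * ((a:ℝ) * a / Vc) := by
        have hterm : ∀ u'' ∈ I'.filter (fun u'' => ¬ ∃ c : F, u'' - um = c • (u' - um)),
            (((E u' ∩ E u'').card : ℝ)) = (a:ℝ) * a / Vc := by
          intro u'' h
          rw [Finset.mem_filter] at h
          have h2 := hInt u' u'' hu'ne ((hmemI' u'').1 h.1)
            (fun c hc => h.2 ⟨c, hc⟩)
          have : (((E u' ∩ E u'').card : ℝ)) * Vc = (a:ℝ) * a := by exact_mod_cast h2
          rw [eq_div_iff (ne_of_gt hVcR)]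
          exact this
        rw [Finset.sum_congr rfl hterm, Finset.sum_const, nsmul_eq_mul]
        apply mul_le_mul_of_nonneg_right _
          (div_nonneg (mul_nonneg (Nat.cast_nonneg _) (Nat.cast_nonneg _)) (Nat.cast_nonneg _))
        calc ((I'.filter _).card : ℝ) ≤ (I'.card : ℝ) := by
              exact_mod_cast Finset.card_le_card (Finset.filter_subset _ _)
          _ = (M:ℝ) - 1 := hI'cardR
      linarith
    have htot : (∑ u' ∈ I', ∑ u'' ∈ I', (((E u' ∩ E u'').card : ℝ)))
        ≤ ((M:ℝ) - 1) * (((q:ℝ) - 1) * a + ((M:ℝ) - 1) * ((a:ℝ) * a / Vc)) := by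
      calc _ ≤ ∑ u' ∈ I', (((q:ℝ) - 1) * a + ((M:ℝ) - 1) * ((a:ℝ) * a / Vc)) :=
            Finset.sum_le_sum hrow
        _ = _ := by rw [Finset.sum_const, nsmul_eq_mul, hI'cardR]
    have hCE2 : (((M:ℝ) - 1) * a)^2 ≤ (U.card : ℝ) *
        (((M:ℝ) - 1) * (((q:ℝ) - 1) * a + ((M:ℝ) - 1) * ((a:ℝ) * a / Vc))) := by
      rw [← hsumE]
      calc (∑ u' ∈ I', ((E u').card : ℝ))^2
          ≤ (U.card : ℝ) * ∑ u' ∈ I', ∑ u'' ∈ I', (((E u' ∩ E u'').card : ℝ)) := hCE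
        _ ≤ _ := by
            apply mul_le_mul_of_nonneg_left htot (Nat.cast_nonneg _)
    have hUP : (U.card : ℝ) = P * Vc := by rw [hP, div_mul_cancel₀ _ (ne_of_gt hVcR)]
    have hkey : S^2 ≤ P * (((q:ℝ) - 1) * S + S^2) := by
      have h2 : S^2 * ((Vc:ℝ))^2 ≤ (P * (((q:ℝ) - 1) * S + S^2)) * ((Vc:ℝ))^2 := by
        calc S^2 * ((Vc:ℝ))^2 = (((M:ℝ) - 1) * a)^2 := by rw [ha_eq, hS]; ring
          _ ≤ (U.card : ℝ) *
              (((M:ℝ) - 1) * (((q:ℝ) - 1) * a + ((M:ℝ) - 1) * ((a:ℝ) * a / Vc))) := hCE2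
          _ = (P * (((q:ℝ) - 1) * S + S^2)) * ((Vc:ℝ))^2 := by
              rw [hUP, ha_eq, hS]
              field_simp
      exact le_of_mul_le_mul_right h2 (by positivity)
    -- conclude the lower bound
    show S / q - S ^ ρ ≤ P
    have hrpow : (0:ℝ) ≤ S ^ ρ := Real.rpow_nonneg hS0 ρ
    rcases le_or_gt S 1 with hS1 | hS1
    · have hSq : S / q ≤ P := by
        rcases eq_or_lt_of_le hS0 with h0 | h0
        · rw [← h0]; simp; exact hP0
        · have hc1 : S ≤ P * (((q:ℝ) - 1) + S) := by
            have : S * S ≤ (P * (((q:ℝ) - 1) + S)) * S := by nlinarith [hkey]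
            exact le_of_mul_le_mul_right this h0
          have hc2 : P * (((q:ℝ) - 1) + S) ≤ P * q := by
            apply mul_le_mul_of_nonneg_left _ hP0
            linarith
          rw [div_le_iff₀ (by linarith : (0:ℝ) < q)]
          calc S ≤ P * q := le_trans hc1 hc2
            _ = P * q := rfl
      linarith
    · have h1 : S / q ≤ S := by
        rw [div_le_iff₀ (by linarith : (0:ℝ) < q)]
        nlinarith
      have h2 : S ≤ S ^ ρ := by
        calc S = S ^ (1:ℝ) := (Real.rpow_one S).symm
          _ ≤ S ^ ρ := Real.rpow_le_rpow_of_exponent_le (le_of_lt hS1) hρ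
      linarith
  · -- UPPER BOUND
    have hUb : (U.card : ℕ) ≤ I'.card * a := by
      calc U.card ≤ ∑ u' ∈ I', (E u').card := Finset.card_biUnion_le
        _ = I'.card * a := by
            rw [Finset.sum_congr rfl (fun u' hu' => by rw [hEa u' ((hmemI' u').1 hu')]),
              Finset.sum_const, smul_eq_mul]
    have hUbR : (U.card : ℝ) ≤ ((M:ℝ) - 1) * a := by
      calc (U.card : ℝ) ≤ ((I'.card * a : ℕ) : ℝ) := by exact_mod_cast hUb
        _ = ((M:ℝ) - 1) * a := by push_cast [hI'card, Nat.cast_sub (by omega : 1 ≤ M)]; ring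
    show P ≤ ((M:ℝ) - 1) * α
    rw [hP]
    rw [div_le_iff₀ hVcR]
    calc (U.card : ℝ) ≤ ((M:ℝ) - 1) * a := hUbR
      _ = ((M:ℝ) - 1) * α * Vc := by rw [ha_eq]; ring
end
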